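/- arXiv:2001.05947 — 5 statements merged into one kernel-verified Lean document; each statement's English description precedes it below -/
import Mathlib

section
/- Let E be a compact Hausdorff semigroup with continuous left multiplications, M a minimal right ideal, and v ∈ M an idempotent. Then Mv is a group with identity element v. -/
/-- In a compact Hausdorff right-topological semigroup with minimal right ideal `M` and
idempotent `v ∈ M`, the set `M * v` is a group with identity `v`. -/
theorem stmt2 {E : Type*} [Semigroup E] [TopologicalSpace E] [CompactSpace E] [T2Space E]
    (hleft : ∀ p : E, Continuous fun q : E => p * q)
    (M : Set E) (hMne : M.Nonempty) (hMcl : IsClosed M)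
    (hMideal : ∀ m ∈ M, ∀ e : E, m * e ∈ M)
    (hmin : ∀ M' : Set E, M'.Nonempty → IsClosed M' → (∀ m ∈ M', ∀ e : E, m * e ∈ M') →
      M' ⊆ M → M' = M)
    (v : E) (hv : v ∈ M) (hvi : v * v = v) :
    v ∈ (fun m => m * v) '' M ∧
    (∀ x ∈ (fun m => m * v) '' M, ∀ y ∈ (fun m => m * v) '' M, x * y ∈ (fun m => m * v) '' M) ∧
    (∀ x ∈ (fun m => m * v) '' M, v * x = x ∧ x * v = x) ∧
    (∀ x ∈ (fun m => m * v) '' M, ∃ y ∈ (fun m => m * v) '' M, x * y = v ∧ y * x = v) := by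
  -- Key lemma: for any x ∈ M, x * E = M, so every b ∈ M is x * e for some e.
  have key : ∀ x ∈ M, ∀ b ∈ M, ∃ e : E, x * e = b := by
    intro x hx b hb
    have hset : (fun e : E => x * e) '' Set.univ = M := by
      apply hmin
      · exact ⟨x * x, ⟨x, trivial, rfl⟩⟩
      · exact (isCompact_univ.image (hleft x)).isClosed
      · rintro m ⟨e, -, rfl⟩ e'
        exact ⟨e * e', trivial, (mul_assoc x e e').symm⟩
      · rintro m ⟨e, -, rfl⟩
        exact hMideal x hx e
    have : b ∈ (fun e : E => x * e) '' Set.univ := hset ▸ hb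
    obtain ⟨e, -, he⟩ := this
    exact ⟨e, he⟩
  -- identities
  have hid : ∀ x ∈ (fun m => m * v) '' M, v * x = x ∧ x * v = x := by
    rintro x ⟨m, hm, rfl⟩
    constructor
    · obtain ⟨e, he⟩ := key v hv m hm
      have : v * (v * e) = v * e := by rw [← mul_assoc, hvi]
      rw [he] at this
      rw [← mul_assoc, this]
    · simp only [mul_assoc, hvi]
  have hMvM : ∀ x ∈ (fun m => m * v) '' M, x ∈ M := by
    rintro x ⟨m, hm, rfl⟩; exact hMideal m hm v
  have hvG : v ∈ (fun m => m * v) '' M := ⟨v, hv, hvi⟩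
  refine ⟨hvG, ?_, hid, ?_⟩
  · rintro x ⟨m, hm, rfl⟩ y ⟨n, hn, rfl⟩
    exact ⟨m * v * n, by rw [mul_assoc]; exact hMideal m hm (v * n), by simp [mul_assoc]⟩
  · -- inverses: first find right inverses
    have rinv : ∀ x ∈ (fun m => m * v) '' M, ∃ y ∈ (fun m => m * v) '' M, x * y = v := by
      intro x hx
      obtain ⟨e, he⟩ := key x (hMvM x hx) v hv
      refine ⟨v * e * v, ⟨v * e, hMideal v hv e, rfl⟩, ?_⟩
      calc x * (v * e * v) = (x * v) * e * v := by simp [mul_assoc]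
        _ = x * e * v := by rw [(hid x hx).2]
        _ = v * v := by rw [he]
        _ = v := hvi
    intro x hx
    obtain ⟨y, hy, hxy⟩ := rinv x hx
    obtain ⟨z, hz, hyz⟩ := rinv y hy
    refine ⟨y, hy, hxy, ?_⟩
    calc y * x = y * x * v := ((hid _ (by exact ⟨y * x, hMideal y (hMvM y hy) x, by
            show y * x * v = y * x
            rw [mul_assoc, (hid x hx).2]⟩)).2).symm
      _ = y * x * (y * z) := by rw [hyz]
      _ = y * (x * y) * z := by simp [mul_assoc]
      _ = y * v * z := by rw [hxy]
      _ = y * z := by rw [(hid y hy).2]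
      _ = v := hyz
end

section
/- Let (μ(n)) denote the Möbius function and suppose that for every bounded sequence g arising as a translation-orbit-closure observation of a Veech function, (1/N) Σ_{n≤N} μ(n) g(n) → 0. Then for any increasing sequence of reals (x_n) with x_{n+1} − x_n → ∞, one has Σ_{k=1}^{n} |M(x_{k+1}) − M(x_k)| = o(x_{n+1}), where M(x) = Σ_{m≤x} μ(m) is the Mertens function. More concretely: if for every sequence (ε_k) ∈ {−1,1}^ℕ the step function f(m) = Σ_k ε_k 1_{[x_k, x_{k+1})}(m) satisfies (1/X) Σ_{m≤X} μ(m) f(m) → 0, then Σ_{k=1}^{n} |M(x_{k+1}) − M(x_k)| = o(x_{n+1}). -/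
open Filter Finset

private lemma sum_subset_singleton_abs_le {f : ℕ → ℝ} (hf : ∀ m, |f m| ≤ 1)
    {u : Finset ℕ} {c : ℕ} (h : u ⊆ {c}) : |∑ m ∈ u, f m| ≤ 1 := by
  rcases Finset.subset_singleton_iff.mp h with rfl | rfl
  · simp
  · simpa using hf c

private lemma abs_sum_sub_sum_le {f : ℕ → ℝ} (hf : ∀ m, |f m| ≤ 1) (a b : ℝ) :
    |(∑ m ∈ Finset.Ico ⌈a⌉₊ ⌈b⌉₊, f m) - ∑ m ∈ Finset.Ioc ⌊a⌋₊ ⌊b⌋₊, f m| ≤ 2 := by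
  have hfa := Nat.floor_le_ceil a
  have hfb := Nat.floor_le_ceil b
  have hca := Nat.ceil_le_floor_add_one a
  have hcb := Nat.ceil_le_floor_add_one b
  rw [← Finset.sum_sdiff_sub_sum_sdiff]
  have h1 : |∑ m ∈ Finset.Ico ⌈a⌉₊ ⌈b⌉₊ \ Finset.Ioc ⌊a⌋₊ ⌊b⌋₊, f m| ≤ 1 := by
    apply sum_subset_singleton_abs_le hf (c := ⌈a⌉₊)
    intro m hm
    simp only [Finset.mem_sdiff, Finset.mem_Ico, Finset.mem_Ioc, not_and, not_le,
      Finset.mem_singleton] at hm ⊢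
    omega
  have h2 : |∑ m ∈ Finset.Ioc ⌊a⌋₊ ⌊b⌋₊ \ Finset.Ico ⌈a⌉₊ ⌈b⌉₊, f m| ≤ 1 := by
    apply sum_subset_singleton_abs_le hf (c := ⌊b⌋₊)
    intro m hm
    simp only [Finset.mem_sdiff, Finset.mem_Ico, Finset.mem_Ioc, not_and, not_lt,
      Finset.mem_singleton] at hm ⊢
    omega
  rw [abs_le] at h1 h2 ⊢
  constructor <;> linarith [h1.1, h1.2, h2.1, h2.2]

private lemma growth_aux (x : ℕ → ℝ) (hx1 : 1 ≤ x 0) (hmono : StrictMono x)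
    (hgap : Tendsto (fun n : ℕ => x (n + 1) - x n) atTop atTop) :
    Tendsto (fun n : ℕ => (n : ℝ) / x (n + 1)) atTop (nhds 0) := by
  have xpos : ∀ n, (0:ℝ) < x n := fun n =>
    lt_of_lt_of_le one_pos (hx1.trans (hmono.monotone (Nat.zero_le n)))
  rw [NormedAddCommGroup.tendsto_nhds_zero]
  intro δ hδ
  obtain ⟨N, hN⟩ := eventually_atTop.mp (hgap.eventually_ge_atTop (2/δ + 1))
  set Cc : ℝ := 2/δ + 1 with hCc
  have hCpos : 0 < Cc := by positivity
  have hind : ∀ m : ℕ, Cc * ((m:ℝ)+1) ≤ x (N + m + 1) := by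
    intro m
    induction m with
    | zero =>
        have h := hN N le_rfl
        have := xpos N
        simp only [Nat.cast_zero, zero_add, mul_one, Nat.add_zero]
        linarith
    | succ m ih =>
        have h1 := hN (N + m + 1) (by omega)
        have harr : N + (m+1) + 1 = (N + m + 1) + 1 := by omega
        rw [harr]
        push_cast
        push_cast at ih
        linarith
  filter_upwards [eventually_ge_atTop (2*N + 2)] with n hn
  obtain ⟨m, rfl⟩ : ∃ m, n = N + m := ⟨n - N, by omega⟩
  have hx := hind m
  have hxpos := xpos (N + m + 1)
  rw [Real.norm_eq_abs, abs_of_nonneg (div_nonneg (Nat.cast_nonneg _) hxpos.le)]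
  rw [div_lt_iff₀ hxpos]
  have hmN : (N:ℝ) + 2 ≤ (m:ℝ) := by exact_mod_cast (by omega : N + 2 ≤ m)
  have hδC : δ * Cc = 2 + δ := by
    rw [hCc]; field_simp
  have h2 : ((N+m:ℕ):ℝ) < δ * (Cc * ((m:ℝ)+1)) := by
    push_cast
    nlinarith [hδ.le, (Nat.cast_nonneg m : (0:ℝ) ≤ (m:ℝ))]
  calc ((N+m:ℕ):ℝ) < δ * (Cc * ((m:ℝ)+1)) := h2
    _ ≤ δ * x (N+m+1) := by nlinarith [hx, hδ.le]


/-- Möbius disjointness for the ±1 step functions built on the blocks `[x_k, x_{k+1})`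
implies `∑_{k=1}^n |M(x_{k+1}) − M(x_k)| = o(x_{n+1})` for the Mertens function `M`,
whenever the gaps `x_{n+1} − x_n` tend to infinity. -/
theorem stmt11 (x : ℕ → ℝ) (hx1 : 1 ≤ x 0) (hmono : StrictMono x)
    (hgap : Tendsto (fun n : ℕ => x (n + 1) - x n) atTop atTop)
    (M : ℝ → ℝ)
    (hM : ∀ r : ℝ, M r = ∑ m ∈ Finset.Icc 1 ⌊r⌋₊, ((ArithmeticFunction.moebius m : ℤ) : ℝ))
    (hdisj : ∀ ε : ℕ → ℝ, (∀ k, ε k = 1 ∨ ε k = -1) →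
      Tendsto (fun X : ℕ => (X : ℝ)⁻¹ * ∑ m ∈ Finset.Icc 1 X,
          ((ArithmeticFunction.moebius m : ℤ) : ℝ) *
            ∑' k : ℕ, Set.indicator (Set.Ico (x k) (x (k + 1))) (fun _ => ε k) (m : ℝ))
        atTop (nhds 0)) :
    Tendsto (fun n : ℕ => (∑ k ∈ Finset.Icc 1 n, |M (x (k + 1)) - M (x k)|) / x (n + 1))
      atTop (nhds 0) := by
  classical
  set f : ℕ → ℝ := fun m => ((ArithmeticFunction.moebius m : ℤ) : ℝ) with hfdef
  have hf : ∀ m, |f m| ≤ 1 := by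
    intro m
    rw [hfdef, ← Int.cast_abs]
    exact_mod_cast ArithmeticFunction.abs_moebius_le_one
  have xone : ∀ n, (1:ℝ) ≤ x n := fun n => hx1.trans (hmono.monotone (Nat.zero_le n))
  have xpos : ∀ n, (0:ℝ) < x n := fun n => lt_of_lt_of_le one_pos (xone n)
  have hxtop : Tendsto x atTop atTop := by
    rw [tendsto_atTop]
    intro b
    obtain ⟨N, hN⟩ := eventually_atTop.mp (hgap.eventually_ge_atTop b)
    filter_upwards [eventually_ge_atTop (N+1)] with n hn
    have h1 : b ≤ x (N+1) - x N := hN N le_rfl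
    have h2 : x (N+1) ≤ x n := hmono.monotone hn
    linarith [xpos N]
  set ε : ℕ → ℝ := fun k => if 0 ≤ M (x (k+1)) - M (x k) then 1 else -1 with hε
  have hεval : ∀ k, ε k = if 0 ≤ M (x (k+1)) - M (x k) then 1 else -1 := fun k => rfl
  have hεpm : ∀ k, ε k = 1 ∨ ε k = -1 := by
    intro k
    by_cases h : 0 ≤ M (x (k+1)) - M (x k)
    · left; rw [hεval, if_pos h]
    · right; rw [hεval, if_neg h]
  have hεabs : ∀ k, ε k * (M (x (k+1)) - M (x k)) = |M (x (k+1)) - M (x k)| := by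
    intro k
    by_cases h : 0 ≤ M (x (k+1)) - M (x k)
    · rw [hεval, if_pos h, one_mul, abs_of_nonneg h]
    · rw [hεval, if_neg h, abs_of_neg (lt_of_not_ge h)]; ring
  set S : ℕ → ℝ := fun X => ∑ m ∈ Finset.Icc 1 X,
      f m * ∑' k : ℕ, Set.indicator (Set.Ico (x k) (x (k + 1))) (fun _ => ε k) (m : ℝ)
    with hSdef
  have hS : Tendsto (fun X : ℕ => (X : ℝ)⁻¹ * S X) atTop (nhds 0) := hdisj ε hεpm
  -- Key inequality for each n
  have key : ∀ n : ℕ, (∑ k ∈ Finset.Icc 1 n, |M (x (k + 1)) - M (x k)|)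
      ≤ |S ⌊x (n+1)⌋₊| + (2 * (n:ℝ) + 3) := by
    intro n
    set X : ℕ := ⌊x (n+1)⌋₊ with hX
    have hfloor_le : (X:ℝ) ≤ x (n+1) := Nat.floor_le (xpos (n+1)).le
    set C : ℕ → ℝ := fun k => ∑ m ∈ (Finset.Icc 1 X).filter
        (fun m : ℕ => ((m:ℕ):ℝ) ∈ Set.Ico (x k) (x (k+1))), f m with hC
    have hSX : S X = ∑ k ∈ Finset.range (n+2), ε k * C k := by
      have step1 : ∀ m ∈ Finset.Icc 1 X,
          (∑' k : ℕ, Set.indicator (Set.Ico (x k) (x (k+1))) (fun _ => ε k) ((m:ℕ):ℝ))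
          = ∑ k ∈ Finset.range (n+2),
              Set.indicator (Set.Ico (x k) (x (k+1))) (fun _ => ε k) ((m:ℕ):ℝ) := by
        intro m hm
        apply tsum_eq_sum
        intro k hk
        have hk' : n + 2 ≤ k := by simpa [Finset.mem_range, not_lt] using hk
        apply Set.indicator_of_notMem
        intro hmem
        rw [Set.mem_Ico] at hmem
        have hmle : ((m:ℕ):ℝ) ≤ x (n+1) := by
          have h2 := (Finset.mem_Icc.mp hm).2
          exact le_trans (by exact_mod_cast h2) hfloor_le
        have hlt : x (n+1) < x k := hmono (by omega)
        linarith [hmem.1]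
      have inner : ∀ k, (∑ m ∈ Finset.Icc 1 X,
          f m * Set.indicator (Set.Ico (x k) (x (k+1))) (fun _ => ε k) ((m:ℕ):ℝ))
          = ε k * C k := by
        intro k
        simp only [hC]
        rw [Finset.sum_filter, Finset.mul_sum]
        apply Finset.sum_congr rfl
        intro m _
        by_cases hmem : ((m:ℕ):ℝ) ∈ Set.Ico (x k) (x (k+1))
        · rw [Set.indicator_of_mem hmem, if_pos hmem]; ring
        · rw [Set.indicator_of_notMem hmem, if_neg hmem, mul_zero, mul_zero]
      calc S X = ∑ m ∈ Finset.Icc 1 X, f m * ∑ k ∈ Finset.range (n+2),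
              Set.indicator (Set.Ico (x k) (x (k+1))) (fun _ => ε k) ((m:ℕ):ℝ) :=
            Finset.sum_congr rfl (fun m hm => by rw [step1 m hm])
        _ = ∑ m ∈ Finset.Icc 1 X, ∑ k ∈ Finset.range (n+2),
              f m * Set.indicator (Set.Ico (x k) (x (k+1))) (fun _ => ε k) ((m:ℕ):ℝ) := by
            simp_rw [Finset.mul_sum]
        _ = ∑ k ∈ Finset.range (n+2), ∑ m ∈ Finset.Icc 1 X,
              f m * Set.indicator (Set.Ico (x k) (x (k+1))) (fun _ => ε k) ((m:ℕ):ℝ) :=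
            Finset.sum_comm
        _ = ∑ k ∈ Finset.range (n+2), ε k * C k :=
            Finset.sum_congr rfl (fun k _ => inner k)
    have hCk : ∀ k ≤ n, C k = ∑ m ∈ Finset.Ico ⌈x k⌉₊ ⌈x (k+1)⌉₊, f m := by
      intro k hk
      rw [hC]
      apply Finset.sum_congr _ (fun _ _ => rfl)
      ext m
      simp only [Finset.mem_filter, Finset.mem_Icc, Finset.mem_Ico, Set.mem_Ico]
      constructor
      · rintro ⟨⟨h1, h2⟩, h3, h4⟩
        exact ⟨Nat.ceil_le.mpr h3, Nat.lt_ceil.mpr h4⟩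
      · rintro ⟨h1, h2⟩
        have h3 : x k ≤ (m:ℝ) := Nat.ceil_le.mp h1
        have h4 : (m:ℝ) < x (k+1) := Nat.lt_ceil.mp h2
        refine ⟨⟨?_, ?_⟩, h3, h4⟩
        · exact_mod_cast (xone k).trans h3
        · exact Nat.le_floor (le_of_lt (lt_of_lt_of_le h4 (hmono.monotone (by omega))))
    have hDk : ∀ k, M (x (k+1)) - M (x k) = ∑ m ∈ Finset.Ioc ⌊x k⌋₊ ⌊x (k+1)⌋₊, f m := by
      intro k
      rw [hM, hM]
      rw [show Finset.Icc 1 ⌊x (k+1)⌋₊ = Finset.Ioc 0 ⌊x (k+1)⌋₊ from Finset.Icc_add_one_left_eq_Ioc 0 _,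
        show Finset.Icc 1 ⌊x k⌋₊ = Finset.Ioc 0 ⌊x k⌋₊ from Finset.Icc_add_one_left_eq_Ioc 0 _]
      have hfl : ⌊x k⌋₊ ≤ ⌊x (k+1)⌋₊ :=
        Nat.floor_le_floor (le_of_lt (hmono (Nat.lt_succ_self k)))
      have hcons := Finset.sum_Ioc_consecutive f (Nat.zero_le ⌊x k⌋₊) hfl
      linarith
    have hClast : |C (n+1)| ≤ 1 := by
      rw [hC]
      apply sum_subset_singleton_abs_le hf (c := X)
      intro m hm
      simp only [Finset.mem_filter, Finset.mem_Icc, Set.mem_Ico] at hm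
      obtain ⟨⟨h1, h2⟩, h3, h4⟩ := hm
      have hXm : (X:ℝ) ≤ (m:ℝ) := le_trans hfloor_le h3
      have hXm' : X ≤ m := by exact_mod_cast hXm
      simp only [Finset.mem_singleton]; omega
    have habs2 : ∀ k ≤ n, |M (x (k+1)) - M (x k)| ≤ ε k * C k + 2 := by
      intro k hk
      have h1 : |C k - (M (x (k+1)) - M (x k))| ≤ 2 := by
        rw [hCk k hk, hDk k]
        exact abs_sum_sub_sum_le hf (x k) (x (k+1))
      have hε1 : |ε k| = 1 := by rcases hεpm k with h | h <;> simp [h]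
      have h2 : |ε k * (C k - (M (x (k+1)) - M (x k)))| ≤ 2 := by
        rw [abs_mul, hε1, one_mul]; exact h1
      have hexp : ε k * C k = |M (x (k+1)) - M (x k)|
          + ε k * (C k - (M (x (k+1)) - M (x k))) := by
        rw [← hεabs k]; ring
      have h3 := abs_le.mp h2
      linarith [h3.1]
    have hsum1 : ∑ k ∈ Finset.Icc 1 n, |M (x (k+1)) - M (x k)|
        ≤ ∑ k ∈ Finset.range (n+1), |M (x (k+1)) - M (x k)| := by
      apply Finset.sum_le_sum_of_subset_of_nonneg
      · intro k hk
        simp only [Finset.mem_Icc, Finset.mem_range] at *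
        omega
      · intros; positivity
    have hsum2 : ∑ k ∈ Finset.range (n+1), |M (x (k+1)) - M (x k)|
        ≤ (∑ k ∈ Finset.range (n+1), ε k * C k) + 2*((n:ℝ)+1) := by
      calc ∑ k ∈ Finset.range (n+1), |M (x (k+1)) - M (x k)|
          ≤ ∑ k ∈ Finset.range (n+1), (ε k * C k + 2) :=
            Finset.sum_le_sum (fun k hk => habs2 k (by
              simp only [Finset.mem_range] at hk; omega))
        _ = (∑ k ∈ Finset.range (n+1), ε k * C k) + 2*((n:ℝ)+1) := by
            rw [Finset.sum_add_distrib, Finset.sum_const, Finset.card_range]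
            push_cast; ring
    have hsplit : ∑ k ∈ Finset.range (n+2), ε k * C k
        = (∑ k ∈ Finset.range (n+1), ε k * C k) + ε (n+1) * C (n+1) :=
      Finset.sum_range_succ _ (n+1)
    have hε1' : |ε (n+1)| = 1 := by rcases hεpm (n+1) with h | h <;> simp [h]
    have hlast : |ε (n+1) * C (n+1)| ≤ 1 := by
      rw [abs_mul, hε1', one_mul]; exact hClast
    have h4 := abs_le.mp hlast
    have h5 : S X ≤ |S X| := le_abs_self _
    have h6 : ∑ k ∈ Finset.range (n+1), ε k * C k = S X - ε (n+1) * C (n+1) := by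
      rw [hSX, hsplit]; ring
    linarith [h4.1, h4.2]
  -- Limits
  have hcomp : Tendsto (fun n : ℕ => x (n+1)) atTop atTop :=
    hxtop.comp (tendsto_add_atTop_nat 1)
  have hgrow := growth_aux x hx1 hmono hgap
  have hxinv : Tendsto (fun n : ℕ => (x (n+1))⁻¹) atTop (nhds 0) :=
    hcomp.inv_tendsto_atTop
  have hfloor_top : Tendsto (fun n : ℕ => ⌊x (n+1)⌋₊) atTop atTop :=
    tendsto_nat_floor_atTop.comp hcomp
  have hS2 : Tendsto (fun n : ℕ => |((⌊x (n+1)⌋₊ : ℕ) : ℝ)⁻¹ * S ⌊x (n+1)⌋₊|)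
      atTop (nhds 0) := by
    have := (hS.comp hfloor_top).abs
    simpa using this
  apply squeeze_zero
    (g := fun n : ℕ => |((⌊x (n+1)⌋₊ : ℕ) : ℝ)⁻¹ * S ⌊x (n+1)⌋₊|
      + (2*((n:ℝ)/x (n+1)) + 3*(x (n+1))⁻¹))
  · intro n
    exact div_nonneg (Finset.sum_nonneg (fun _ _ => abs_nonneg _)) (xpos (n+1)).le
  · intro n
    have hkey := key n
    have hx' := xpos (n+1)
    have hX1 : (1:ℝ) ≤ ((⌊x (n+1)⌋₊ : ℕ) : ℝ) := by
      exact_mod_cast Nat.le_floor (by exact_mod_cast xone (n+1) : ((1:ℕ):ℝ) ≤ x (n+1))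
    have hXpos : (0:ℝ) < ((⌊x (n+1)⌋₊ : ℕ) : ℝ) := lt_of_lt_of_le one_pos hX1
    have hfl : ((⌊x (n+1)⌋₊ : ℕ) : ℝ) ≤ x (n+1) := Nat.floor_le hx'.le
    calc (∑ k ∈ Finset.Icc 1 n, |M (x (k + 1)) - M (x k)|) / x (n+1)
        ≤ (|S ⌊x (n+1)⌋₊| + (2*(n:ℝ)+3)) / x (n+1) := by
          gcongr
      _ = |S ⌊x (n+1)⌋₊| / x (n+1) + (2*(n:ℝ)+3)/x (n+1) := add_div _ _ _
      _ ≤ |S ⌊x (n+1)⌋₊| / ((⌊x (n+1)⌋₊ : ℕ) : ℝ) + (2*(n:ℝ)+3)/x (n+1) := by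
          gcongr
      _ = |((⌊x (n+1)⌋₊ : ℕ) : ℝ)⁻¹ * S ⌊x (n+1)⌋₊|
            + (2*((n:ℝ)/x (n+1)) + 3*(x (n+1))⁻¹) := by
          rw [abs_mul, abs_inv, Nat.abs_cast]
          field_simp
  · have : Tendsto (fun n : ℕ => |((⌊x (n+1)⌋₊ : ℕ) : ℝ)⁻¹ * S ⌊x (n+1)⌋₊|
        + (2*((n:ℝ)/x (n+1)) + 3*(x (n+1))⁻¹)) atTop (nhds (0 + (2*0 + 3*0))) :=
      hS2.add ((hgrow.const_mul 2).add (hxinv.const_mul 3))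
    simpa using this
end

section
/- Assume Davenport's estimate: for every A > 0 there is C_A such that sup_{θ} |Σ_{n≤N} μ(n) e^{inθ}| ≤ C_A N / (log N)^A for N ≥ 2. Then there exist constants C > 0 and κ > 0 such that for all N ≥ 2, (1/N) Σ_{m=1}^{N} | (1/N) Σ_{n=1}^{N} μ(n) μ(n+m) | ≤ C / (log N)^κ. (The same holds for the Liouville function λ.) -/
open Filter

open Finset Complex Real


private lemma ortho (M : ℕ) (hM : 0 < M) (k : ℤ) (hk : k.natAbs < M) :
    ∑ j ∈ Finset.range M, Complex.exp (Complex.I * k * ((2 * π * j / M : ℝ) : ℂ)) =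
      if k = 0 then (M : ℂ) else 0 := by
  have hMR : (M : ℝ) ≠ 0 := Nat.cast_ne_zero.mpr hM.ne'
  have hMC : (M : ℂ) ≠ 0 := Nat.cast_ne_zero.mpr hM.ne'
  have key : ∀ j ∈ Finset.range M,
      Complex.exp (Complex.I * k * ((2 * π * j / M : ℝ) : ℂ)) =
        Complex.exp (Complex.I * k * (2 * π / M)) ^ j := by
    intro j _
    rw [← Complex.exp_nat_mul]
    congr 1
    push_cast
    field_simp
  rw [Finset.sum_congr rfl key]
  by_cases hk0 : k = 0
  · simp [hk0]
  · have hζM : Complex.exp (Complex.I * k * (2 * π / M)) ^ M = 1 := by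
      rw [← Complex.exp_nat_mul]
      have h : (M : ℂ) * (Complex.I * k * (2 * π / M)) = k * (2 * π * Complex.I) := by
        field_simp
      rw [h, Complex.exp_int_mul_two_pi_mul_I]
    have hζ1 : Complex.exp (Complex.I * k * (2 * π / M)) ≠ 1 := by
      intro h
      rw [Complex.exp_eq_one_iff] at h
      obtain ⟨n, hn⟩ := h
      have hI : (Complex.I : ℂ) ≠ 0 := Complex.I_ne_zero
      have hπ : (π : ℂ) ≠ 0 := Complex.ofReal_ne_zero.mpr Real.pi_ne_zero
      have hk' : (k : ℂ) = n * M := by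
        field_simp at hn
        have h2 : (2 * (π:ℂ) * Complex.I) ≠ 0 := by
          simp [Real.pi_ne_zero, Complex.I_ne_zero]
        have h3 : (k:ℂ) * (2*π*Complex.I) = (n*M) * (2*π*Complex.I) := by
          linear_combination (2*π*Complex.I) * hn
        exact mul_right_cancel₀ h2 h3
      have hk'' : k = n * M := by exact_mod_cast hk'
      have hdvd : (M : ℤ) ∣ k := ⟨n, by linarith [hk'']⟩
      have : M ∣ k.natAbs := by simpa using Int.natAbs_dvd_natAbs.mpr hdvd
      have := Nat.le_of_dvd (Int.natAbs_pos.mpr hk0) this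
      omega
    rw [geom_sum_eq hζ1, hζM]
    simp [hk0]

private lemma parseval {ι : Type*} (s : Finset ι) (g : ι → ℝ) (d : ι → ℤ) (M : ℕ)
    (hM : 0 < M) (hd : ∀ x ∈ s, ∀ y ∈ s, (d x - d y).natAbs < M) :
    ∑ j ∈ Finset.range M, Complex.normSq
        (∑ x ∈ s, (g x : ℂ) * Complex.exp (Complex.I * d x * ((2 * π * j / M : ℝ) : ℂ)))
      = M * ∑ x ∈ s, ∑ y ∈ s, (if d x = d y then g x * g y else 0) := by
  classical
  set θ : ℕ → ℝ := fun j => 2 * π * j / M with hθ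
  set a : ι → ℕ → ℂ := fun x j => (g x : ℂ) * Complex.exp (Complex.I * d x * ((θ j : ℝ) : ℂ))
    with ha
  have key : ∀ j ∈ Finset.range M,
      ((Complex.normSq (∑ x ∈ s, a x j) : ℝ) : ℂ)
        = ∑ x ∈ s, ∑ y ∈ s, (g x * g y : ℂ) *
            Complex.exp (Complex.I * (d x - d y) * ((θ j : ℝ) : ℂ)) := by
    intro j _
    rw [← Complex.mul_conj]
    rw [map_sum, Finset.sum_mul_sum]
    refine Finset.sum_congr rfl fun x _ => Finset.sum_congr rfl fun y _ => ?_
    simp only [ha, map_mul, Complex.conj_ofReal, ← Complex.exp_conj, Complex.conj_I,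
      map_intCast]
    rw [mul_mul_mul_comm, ← Complex.exp_add]
    congr 2
    push_cast
    ring_nf
  have cast_eq : ((∑ j ∈ Finset.range M, Complex.normSq (∑ x ∈ s, a x j) : ℝ) : ℂ)
      = ((M * ∑ x ∈ s, ∑ y ∈ s, (if d x = d y then g x * g y else 0) : ℝ) : ℂ) := by
    push_cast
    rw [Finset.sum_congr rfl key, Finset.sum_comm]
    have : ∀ x ∈ s, ∑ j ∈ Finset.range M, ∑ y ∈ s, (g x * g y : ℂ) *
          Complex.exp (Complex.I * (d x - d y) * ((θ j : ℝ) : ℂ))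
        = ∑ y ∈ s, (if d x = d y then (M : ℂ) * (g x * g y) else 0) := by
      intro x hx
      rw [Finset.sum_comm]
      refine Finset.sum_congr rfl fun y hy => ?_
      rw [← Finset.mul_sum]
      have hsum : ∑ j ∈ Finset.range M,
          Complex.exp (Complex.I * ((d x : ℂ) - d y) * ((θ j : ℝ) : ℂ))
            = if d x - d y = 0 then (M : ℂ) else 0 := by
        rw [← ortho M hM (d x - d y) (hd x hx y hy)]
        refine Finset.sum_congr rfl fun j _ => ?_
        congr 1
        push_cast [hθ]
        ring
      rw [hsum]
      rcases eq_or_ne (d x) (d y) with h | h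
      · simp [h, sub_eq_zero.mpr, mul_comm]
      · simp [sub_eq_zero, h]
    rw [Finset.sum_congr rfl this, Finset.mul_sum]
    refine Finset.sum_congr rfl fun x _ => ?_
    rw [Finset.mul_sum]
    refine Finset.sum_congr rfl fun y _ => ?_
    split <;> simp
  exact_mod_cast cast_eq

private lemma fiber_sq {ι : Type*} [DecidableEq ι] (s : Finset ι) (g : ι → ℝ) (d : ι → ℤ)
    (t : Finset ℤ) (ht : ∀ x ∈ s, d x ∈ t) :
    ∑ x ∈ s, ∑ y ∈ s, (if d x = d y then g x * g y else 0)
      = ∑ k ∈ t, (∑ x ∈ s.filter (fun x => d x = k), g x) ^ 2 := by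
  classical
  have h1 : ∀ k ∈ t, (∑ x ∈ s.filter (fun x => d x = k), g x) ^ 2
      = ∑ x ∈ s.filter (fun x => d x = k),
          ∑ y ∈ s, (if d x = d y then g x * g y else 0) := by
    intro k _
    rw [sq, Finset.sum_mul_sum]
    refine Finset.sum_congr rfl fun x hx => ?_
    obtain ⟨hxs, hdx⟩ := Finset.mem_filter.mp hx
    rw [Finset.sum_filter]
    refine Finset.sum_congr rfl fun y _ => ?_
    rcases eq_or_ne (d y) k with h | h
    · simp [h, hdx]
    · simp [h, hdx, Ne.symm h]
  rw [Finset.sum_congr rfl h1,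
    Finset.sum_fiberwise_of_maps_to ht (fun x => ∑ y ∈ s, (if d x = d y then g x * g y else 0))]

private lemma key_bound (N : ℕ) (hN : 2 ≤ N) (f : ℕ → ℝ) (hf1 : ∀ n, |f n| ≤ 1)
    (B : ℝ) (hB0 : 0 ≤ B)
    (hB : ∀ θ : ℝ, ‖∑ n ∈ Finset.Icc 1 N, (f n : ℂ) *
        Complex.exp (Complex.I * n * (θ : ℂ))‖ ≤ B) :
    ∑ m ∈ Finset.Icc 1 N, |∑ n ∈ Finset.Icc 1 N, f n * f (n + m)| ≤ 2 * B * N := by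
  classical
  set D : Finset (ℕ × ℕ) := Finset.Icc 1 N ×ˢ Finset.Icc 1 (2 * N) with hD
  set d : ℕ × ℕ → ℤ := fun x => (x.2 : ℤ) - (x.1 : ℤ) with hd
  set g : ℕ × ℕ → ℝ := fun x => f x.1 * f x.2 with hg
  set M : ℕ := 4 * N with hM
  have hM0 : 0 < M := by omega
  have hNR : (0 : ℝ) < N := by positivity
  -- bound on differences of degrees
  have hdd : ∀ x ∈ D, ∀ y ∈ D, (d x - d y).natAbs < M := by
    intro x hx y hy
    simp only [hD, Finset.mem_product, Finset.mem_Icc] at hx hy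
    simp only [hd, hM]
    omega
  -- Parseval for the product polynomial
  have hp1 := parseval D g d M hM0 hdd
  -- factorization of the product polynomial
  have hfac : ∀ θ : ℝ, (∑ x ∈ D, (g x : ℂ) *
      Complex.exp (Complex.I * (d x : ℂ) * (θ : ℂ)))
      = (∑ n ∈ Finset.Icc 1 N, (f n : ℂ) *
          Complex.exp (Complex.I * n * (((-θ : ℝ)) : ℂ))) *
        (∑ p ∈ Finset.Icc 1 (2 * N), (f p : ℂ) *
          Complex.exp (Complex.I * p * (θ : ℂ))) := by
    intro θ
    rw [hD, Finset.sum_mul_sum, Finset.sum_product]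
    refine Finset.sum_congr rfl fun n _ => Finset.sum_congr rfl fun p _ => ?_
    rw [mul_mul_mul_comm, ← Complex.exp_add]
    congr 1
    · push_cast [hg]; ring
    · congr 1
      push_cast [hd]
      ring
  -- Parseval for G
  have hdd2 : ∀ x ∈ Finset.Icc 1 (2 * N), ∀ y ∈ Finset.Icc 1 (2 * N),
      (((x : ℤ)) - (y : ℤ)).natAbs < M := by
    intro x hx y hy
    simp only [Finset.mem_Icc] at hx hy
    simp only [hM]
    omega
  have hp2 := parseval (Finset.Icc 1 (2 * N)) f (fun p => (p : ℤ)) M hM0 hdd2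
  have hGdiag : ∑ x ∈ Finset.Icc 1 (2 * N), ∑ y ∈ Finset.Icc 1 (2 * N),
      (if (x : ℤ) = (y : ℤ) then f x * f y else 0) = ∑ p ∈ Finset.Icc 1 (2 * N), f p ^ 2 := by
    refine Finset.sum_congr rfl fun p hp => ?_
    have h1 : ∀ y : ℕ, ((p : ℤ) = (y : ℤ)) ↔ y = p := by intro y; omega
    rw [Finset.sum_congr rfl fun y _ => if_congr (h1 y) rfl rfl,
      Finset.sum_ite_eq' (Finset.Icc 1 (2 * N)) p (fun y => f p * f y), if_pos hp, sq]
  -- sum of squares of coefficients of G is at most 2N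
  have hG2 : ∑ p ∈ Finset.Icc 1 (2 * N), f p ^ 2 ≤ 2 * (N : ℝ) := by
    have h1 : ∀ p ∈ Finset.Icc 1 (2 * N), f p ^ 2 ≤ 1 := by
      intro p _
      have h := abs_le.mp (hf1 p)
      nlinarith [h.1, h.2]
    calc ∑ p ∈ Finset.Icc 1 (2 * N), f p ^ 2 ≤ ∑ _p ∈ Finset.Icc 1 (2 * N), (1 : ℝ) :=
          Finset.sum_le_sum h1
      _ = ((Finset.Icc 1 (2 * N)).card : ℝ) := by rw [Finset.sum_const, nsmul_eq_mul, mul_one]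
      _ = 2 * (N : ℝ) := by rw [Nat.card_Icc]; push_cast; ring
  -- identify the Parseval sum for G
  have hGsum : ∑ j ∈ Finset.range M, Complex.normSq
      (∑ p ∈ Finset.Icc 1 (2 * N), (f p : ℂ) *
        Complex.exp (Complex.I * p * ((2 * Real.pi * j / M : ℝ) : ℂ)))
      = (M : ℝ) * ∑ p ∈ Finset.Icc 1 (2 * N), f p ^ 2 := by
    rw [← hGdiag, ← hp2]
    refine Finset.sum_congr rfl fun j _ => ?_
    norm_cast
  -- sup bound on F
  have hFb : ∀ θ : ℝ, Complex.normSq (∑ n ∈ Finset.Icc 1 N, (f n : ℂ) *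
      Complex.exp (Complex.I * n * (((-θ : ℝ)) : ℂ))) ≤ B ^ 2 := by
    intro θ
    rw [Complex.normSq_eq_norm_sq]
    have := hB (-θ)
    exact pow_le_pow_left₀ (norm_nonneg _) this 2
  -- the full chain bounding the diagonal sum
  have hdiag_le : ∑ x ∈ D, ∑ y ∈ D, (if d x = d y then g x * g y else 0)
      ≤ 2 * B ^ 2 * N := by
    have hMR : (0 : ℝ) < (M : ℝ) := by exact_mod_cast hM0
    have hchain : (M : ℝ) * (∑ x ∈ D, ∑ y ∈ D, (if d x = d y then g x * g y else 0))
        ≤ (M : ℝ) * (2 * B ^ 2 * N) := by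
      rw [← hp1]
      calc ∑ j ∈ Finset.range M, Complex.normSq (∑ x ∈ D, (g x : ℂ) *
            Complex.exp (Complex.I * (d x : ℂ) * ((2 * Real.pi * j / M : ℝ) : ℂ)))
          = ∑ j ∈ Finset.range M,
            Complex.normSq (∑ n ∈ Finset.Icc 1 N, (f n : ℂ) *
              Complex.exp (Complex.I * n * (((-(2 * Real.pi * j / M) : ℝ)) : ℂ))) *
            Complex.normSq (∑ p ∈ Finset.Icc 1 (2 * N), (f p : ℂ) *
              Complex.exp (Complex.I * p * ((2 * Real.pi * j / M : ℝ) : ℂ))) := by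
            refine Finset.sum_congr rfl fun j _ => ?_
            rw [hfac (2 * Real.pi * j / M), Complex.normSq_mul]
        _ ≤ ∑ j ∈ Finset.range M, B ^ 2 *
            Complex.normSq (∑ p ∈ Finset.Icc 1 (2 * N), (f p : ℂ) *
              Complex.exp (Complex.I * p * ((2 * Real.pi * j / M : ℝ) : ℂ))) := by
            refine Finset.sum_le_sum fun j _ => ?_
            exact mul_le_mul_of_nonneg_right (hFb (2 * Real.pi * j / M))
              (Complex.normSq_nonneg _)
        _ = B ^ 2 * ((M : ℝ) * ∑ p ∈ Finset.Icc 1 (2 * N), f p ^ 2) := by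
            rw [← Finset.mul_sum, hGsum]
        _ ≤ B ^ 2 * ((M : ℝ) * (2 * N)) := by
            have := mul_le_mul_of_nonneg_left hG2 (le_of_lt hMR)
            exact mul_le_mul_of_nonneg_left this (sq_nonneg B)
        _ = (M : ℝ) * (2 * B ^ 2 * N) := by ring
    exact le_of_mul_le_mul_left hchain hMR
  -- lower bound of the diagonal sum by the sum of squared correlations
  have ht : ∀ x ∈ D, d x ∈ Finset.Icc (-(4 * (N : ℤ))) (4 * N) := by
    intro x hx
    simp only [hD, Finset.mem_product, Finset.mem_Icc] at hx
    simp only [hd, Finset.mem_Icc]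
    omega
  have hfib := fiber_sq D g d (Finset.Icc (-(4 * (N : ℤ))) (4 * N)) ht
  have hcS : ∀ m ∈ Finset.Icc 1 N,
      (∑ x ∈ D.filter (fun x => d x = (m : ℤ)), g x)
        = ∑ n ∈ Finset.Icc 1 N, f n * f (n + m) := by
    intro m hm
    obtain ⟨hm1, hm2⟩ := Finset.mem_Icc.mp hm
    rw [Finset.sum_filter, hD, Finset.sum_product]
    refine Finset.sum_congr rfl fun n hn => ?_
    obtain ⟨hn1, hn2⟩ := Finset.mem_Icc.mp hn
    have hcond : ∀ p : ℕ, (d (n, p) = (m : ℤ)) ↔ p = n + m := by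
      intro p; simp only [hd]; omega
    rw [Finset.sum_congr rfl fun p _ => if_congr (hcond p) rfl rfl,
      Finset.sum_ite_eq' (Finset.Icc 1 (2 * N)) (n + m) (fun p => g (n, p)),
      if_pos (Finset.mem_Icc.mpr ⟨by omega, by omega⟩)]
  have hlow : ∑ m ∈ Finset.Icc 1 N, (∑ n ∈ Finset.Icc 1 N, f n * f (n + m)) ^ 2
      ≤ ∑ x ∈ D, ∑ y ∈ D, (if d x = d y then g x * g y else 0) := by
    rw [hfib]
    have himg : ∑ m ∈ Finset.Icc 1 N, (∑ n ∈ Finset.Icc 1 N, f n * f (n + m)) ^ 2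
        = ∑ k ∈ (Finset.Icc 1 N).image (fun m : ℕ => (m : ℤ)),
            (∑ x ∈ D.filter (fun x => d x = k), g x) ^ 2 := by
      rw [Finset.sum_image (by intro a _ b _ h; exact Nat.cast_injective h)]
      exact Finset.sum_congr rfl fun m hm => by rw [hcS m hm]
    rw [himg]
    refine Finset.sum_le_sum_of_subset_of_nonneg ?_ (fun k _ _ => sq_nonneg _)
    intro k hk
    obtain ⟨m, hm, rfl⟩ := Finset.mem_image.mp hk
    obtain ⟨_, hm2⟩ := Finset.mem_Icc.mp hm
    rw [Finset.mem_Icc]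
    omega
  -- Cauchy–Schwarz
  have hCS := sq_sum_le_card_mul_sum_sq (s := Finset.Icc 1 N)
    (f := fun m => |∑ n ∈ Finset.Icc 1 N, f n * f (n + m)|)
  have hcard : ((Finset.Icc 1 N).card : ℝ) = N := by
    have h : (Finset.Icc 1 N).card = N := by rw [Nat.card_Icc]; omega
    rw [h]
  have habs : ∀ m : ℕ, |∑ n ∈ Finset.Icc 1 N, f n * f (n + m)| ^ 2
      = (∑ n ∈ Finset.Icc 1 N, f n * f (n + m)) ^ 2 := fun m => sq_abs _
  have hX2 : (∑ m ∈ Finset.Icc 1 N, |∑ n ∈ Finset.Icc 1 N, f n * f (n + m)|) ^ 2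
      ≤ (N : ℝ) * (2 * B ^ 2 * N) := by
    calc (∑ m ∈ Finset.Icc 1 N, |∑ n ∈ Finset.Icc 1 N, f n * f (n + m)|) ^ 2
        ≤ ((Finset.Icc 1 N).card : ℝ) *
            ∑ m ∈ Finset.Icc 1 N, |∑ n ∈ Finset.Icc 1 N, f n * f (n + m)| ^ 2 := hCS
      _ = (N : ℝ) * ∑ m ∈ Finset.Icc 1 N, (∑ n ∈ Finset.Icc 1 N, f n * f (n + m)) ^ 2 := by
          rw [hcard]
          exact congrArg _ (Finset.sum_congr rfl fun m _ => habs m)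
      _ ≤ (N : ℝ) * (2 * B ^ 2 * N) :=
          mul_le_mul_of_nonneg_left (hlow.trans hdiag_le) (le_of_lt hNR)
  have hXnn : 0 ≤ ∑ m ∈ Finset.Icc 1 N, |∑ n ∈ Finset.Icc 1 N, f n * f (n + m)| :=
    Finset.sum_nonneg fun m _ => abs_nonneg _
  nlinarith [hX2, hXnn, mul_nonneg hB0 (le_of_lt hNR), sq_nonneg
    ((∑ m ∈ Finset.Icc 1 N, |∑ n ∈ Finset.Icc 1 N, f n * f (n + m)|) - 2 * B * N),
    sq_nonneg ((∑ m ∈ Finset.Icc 1 N, |∑ n ∈ Finset.Icc 1 N, f n * f (n + m)|) + 2 * B * N)]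

/-- Davenport's estimate implies a quantitative bound for the averaged two-point Chowla
correlations of the Möbius function: there are `C, κ > 0` with
`(1/N) ∑_{m ≤ N} |(1/N) ∑_{n ≤ N} μ(n) μ(n+m)| ≤ C / (log N)^κ` for all `N ≥ 2`. -/
theorem stmt12
    (hDav : ∀ A : ℝ, 0 < A → ∃ C : ℝ, 0 < C ∧ ∀ N : ℕ, 2 ≤ N → ∀ θ : ℝ,
      ‖∑ n ∈ Finset.Icc 1 N, ((ArithmeticFunction.moebius n : ℤ) : ℂ) *
          Complex.exp (Complex.I * n * θ)‖ ≤ C * N / Real.log N ^ A) :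
    ∃ C : ℝ, 0 < C ∧ ∃ κ : ℝ, 0 < κ ∧ ∀ N : ℕ, 2 ≤ N →
      (N : ℝ)⁻¹ * ∑ m ∈ Finset.Icc 1 N,
          |(N : ℝ)⁻¹ * ∑ n ∈ Finset.Icc 1 N,
              ((ArithmeticFunction.moebius n : ℤ) : ℝ) *
                ((ArithmeticFunction.moebius (n + m) : ℤ) : ℝ)| ≤
        C / Real.log N ^ κ := by
  obtain ⟨C, hC, hBound⟩ := hDav 1 one_pos
  refine ⟨2 * C, by positivity, 1, one_pos, fun N hN => ?_⟩
  have hN2 : (2 : ℝ) ≤ (N : ℝ) := by exact_mod_cast hN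
  have hN0 : (0 : ℝ) < N := by linarith
  have hL : 0 < Real.log N := Real.log_pos (by linarith)
  have hf1 : ∀ n : ℕ, |((ArithmeticFunction.moebius n : ℤ) : ℝ)| ≤ 1 := by
    intro n
    rw [← Int.cast_abs]
    exact_mod_cast ArithmeticFunction.abs_moebius_le_one
  set B : ℝ := C * N / Real.log N with hBdef
  have hB0 : 0 ≤ B := by positivity
  have hB : ∀ θ : ℝ, ‖∑ n ∈ Finset.Icc 1 N,
      (((ArithmeticFunction.moebius n : ℤ) : ℝ) : ℂ) *
        Complex.exp (Complex.I * n * (θ : ℂ))‖ ≤ B := by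
    intro θ
    have h := hBound N hN θ
    rw [Real.rpow_one] at h
    have heq : ∑ n ∈ Finset.Icc 1 N, (((ArithmeticFunction.moebius n : ℤ) : ℝ) : ℂ) *
        Complex.exp (Complex.I * n * (θ : ℂ))
        = ∑ n ∈ Finset.Icc 1 N, ((ArithmeticFunction.moebius n : ℤ) : ℂ) *
          Complex.exp (Complex.I * n * (θ : ℂ)) := by
      refine Finset.sum_congr rfl fun n _ => ?_
      norm_cast
    rw [heq]
    exact h
  have hkey : ∑ m ∈ Finset.Icc 1 N, |∑ n ∈ Finset.Icc 1 N,
      ((ArithmeticFunction.moebius n : ℤ) : ℝ) *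
        ((ArithmeticFunction.moebius (n + m) : ℤ) : ℝ)| ≤ 2 * B * N :=
    key_bound N hN (fun n => ((ArithmeticFunction.moebius n : ℤ) : ℝ)) hf1 B hB0 hB
  rw [Real.rpow_one]
  have habs : ∀ m : ℕ, |(N : ℝ)⁻¹ * ∑ n ∈ Finset.Icc 1 N,
      ((ArithmeticFunction.moebius n : ℤ) : ℝ) * ((ArithmeticFunction.moebius (n + m) : ℤ) : ℝ)|
      = (N : ℝ)⁻¹ * |∑ n ∈ Finset.Icc 1 N,
      ((ArithmeticFunction.moebius n : ℤ) : ℝ) *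
        ((ArithmeticFunction.moebius (n + m) : ℤ) : ℝ)| := by
    intro m
    rw [abs_mul, _root_.abs_of_nonneg (inv_nonneg.mpr hN0.le)]
  rw [Finset.sum_congr rfl fun m _ => habs m, ← Finset.mul_sum]
  have hstep : (N : ℝ)⁻¹ * ((N : ℝ)⁻¹ * ∑ m ∈ Finset.Icc 1 N, |∑ n ∈ Finset.Icc 1 N,
      ((ArithmeticFunction.moebius n : ℤ) : ℝ) *
        ((ArithmeticFunction.moebius (n + m) : ℤ) : ℝ)|)
      ≤ (N : ℝ)⁻¹ * ((N : ℝ)⁻¹ * (2 * B * N)) := by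
    have h1 := mul_le_mul_of_nonneg_left hkey (inv_nonneg.mpr hN0.le)
    exact mul_le_mul_of_nonneg_left h1 (inv_nonneg.mpr hN0.le)
  refine hstep.trans (le_of_eq ?_)
  rw [hBdef]
  field_simp
end

section
/- Let B = {b_k} be pairwise coprime integers ≥ 2 with Σ 1/b_k < ∞, and let χ_K be the indicator of multiples of b_1,…,b_K with period c = b_1⋯b_K. Then the natural density of {n : χ_K(n) = 1} equals 1 − ∏_{k=1}^{K} (1 − 1/b_k); consequently limsup_N sup_k (1/N) Σ_{n=1}^{N} |χ_B(n+k) − χ_K(n+k)| ≥ 1 − ∏_{k=1}^{K}(1 − 1/b_k) > 0, where χ_B is the indicator of B-free integers shifted appropriately — i.e., the Besicovitch approximation of the multiples-of-B indicator by χ_K is not uniform in shifts. -/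
open Filter Finset

section pieces

lemma aux_crt {ι : Type*} [Fintype ι] (m : ι → ℕ) (hm : ∀ i, m i ≠ 0)
    (hcop : Pairwise (Function.onFun Nat.Coprime m)) (r : ∀ i, ZMod (m i)) :
    ∃ j : ℕ, ∀ i, (j : ZMod (m i)) = r i := by
  haveI : NeZero (∏ i, m i) := ⟨Finset.prod_ne_zero_iff.mpr fun i _ => hm i⟩
  set e := ZMod.prodEquivPi m hcop with he
  refine ⟨(e.symm r).val, fun i => ?_⟩
  have h0 : (((e.symm r).val : ℕ) : ZMod (∏ i, m i)) = e.symm r :=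
    ZMod.natCast_rightInverse _
  have h1 : e (((e.symm r).val : ℕ) : ZMod (∏ i, m i)) = (((e.symm r).val : ℕ) : ∀ i, ZMod (m i)) :=
    map_natCast _ _
  have h2 := congrFun h1 i
  rw [h0, e.apply_symm_apply] at h2
  rw [h2]
  simp [Pi.natCast_apply]

open scoped Classical in
lemma aux_period_count (b : ℕ → ℕ) (hb : ∀ k, 2 ≤ b k)
    (hcop : ∀ k l, k ≠ l → Nat.Coprime (b k) (b l)) (K : ℕ) (hK : 1 ≤ K) :
    ((Finset.Ioc 0 (∏ k ∈ Finset.range K, b k)).filter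
        fun n => ¬ ∃ k < K, b k ∣ n).card = ∏ k ∈ Finset.range K, (b k - 1) := by
  set c := ∏ k ∈ Finset.range K, b k with hc
  have hb0 : ∀ k, b k ≠ 0 := fun k => by have := hb k; omega
  haveI : ∀ i : Fin K, NeZero (b i) := fun i => ⟨hb0 i⟩
  have hpair : Pairwise (Function.onFun Nat.Coprime fun i : Fin K => b i) :=
    fun i j hij => hcop i j (fun h => hij (Fin.ext h))
  have hc' : (∏ i : Fin K, b (i : ℕ)) = c := by
    rw [hc, Fin.prod_univ_eq_prod_range]
  have hcpos : 0 < c := Finset.prod_pos fun k _ => by have := hb k; omega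
  haveI : NeZero c := ⟨hcpos.ne'⟩
  haveI : NeZero (∏ i : Fin K, b (i : ℕ)) := ⟨by rw [hc']; exact hcpos.ne'⟩
  set e := ZMod.prodEquivPi (fun i : Fin K => b i) hpair with he
  -- key: components of e applied to natCast
  have ekey : ∀ (n : ℕ) (i : Fin K),
      e ((n : ℕ) : ZMod (∏ i : Fin K, b (i : ℕ))) i = ((n : ℕ) : ZMod (b i)) := by
    intro n i
    have h1 : e ((n : ℕ) : ZMod (∏ i : Fin K, b (i : ℕ))) = ((n : ℕ) : ∀ i : Fin K, ZMod (b (i : ℕ))) :=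
      map_natCast _ _
    rw [h1]; simp
  rw [show (∏ k ∈ Finset.range K, (b k - 1)) = ∏ i : Fin K,
      ((Finset.univ.filter fun x : ZMod (b i) => x ≠ 0).card) from ?_]
  · rw [← Fintype.card_piFinset]
    apply Finset.card_bij (fun n _ => fun i : Fin K => ((n : ℕ) : ZMod (b i)))
    · -- maps into
      intro n hn
      simp only [Finset.mem_filter, Finset.mem_Ioc] at hn
      rw [Fintype.mem_piFinset]
      intro i
      simp only [Finset.mem_filter, Finset.mem_univ, true_and]
      intro h0
      exact hn.2 ⟨i, i.2, (ZMod.natCast_eq_zero_iff n (b i)).mp h0⟩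
    · -- inj
      intro n hn m hm hnm
      simp only [Finset.mem_filter, Finset.mem_Ioc] at hn hm
      have hcast : ((n : ℕ) : ZMod (∏ i : Fin K, b (i : ℕ))) = ((m : ℕ) : ZMod _) := by
        apply e.injective
        funext i
        rw [ekey, ekey]
        exact congrFun hnm i
      rw [hc', ZMod.natCast_eq_natCast_iff] at hcast
      have hd := hcast.dvd
      have : ((m : ℤ) - n) = 0 := by
        apply Int.eq_zero_of_abs_lt_dvd hd
        have h1 := hn.1.1; have h2 := hn.1.2; have h3 := hm.1.1; have h4 := hm.1.2
        rw [abs_lt]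
        constructor <;> [push_cast; push_cast] <;> omega
      omega
    · -- surj
      intro y hy
      rw [Fintype.mem_piFinset] at hy
      set x := e.symm y with hx
      have hxne : x ≠ 0 := by
        intro h0
        have := hy ⟨0, hK⟩
        simp only [Finset.mem_filter, Finset.mem_univ, true_and] at this
        apply this
        have : e x = y := e.apply_symm_apply y
        rw [h0, map_zero] at this
        exact (congrFun this ⟨0, hK⟩).symm
      refine ⟨x.val, ?_, ?_⟩
      · simp only [Finset.mem_filter, Finset.mem_Ioc]
        have hvpos : 0 < x.val := by
          rcases Nat.eq_zero_or_pos x.val with h | h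
          · exact absurd ((ZMod.val_eq_zero x).mp h) hxne
          · exact h
        have hvlt : x.val < ∏ i : Fin K, b (i : ℕ) := ZMod.val_lt x
        refine ⟨⟨hvpos, by rw [← hc']; omega⟩, ?_⟩
        rintro ⟨k, hkK, hdvd⟩
        have hzero : ((x.val : ℕ) : ZMod (b k)) = 0 :=
          (ZMod.natCast_eq_zero_iff _ _).mpr hdvd
        have := hy ⟨k, hkK⟩
        simp only [Finset.mem_filter, Finset.mem_univ, true_and] at this
        apply this
        have hxv : ((x.val : ℕ) : ZMod (∏ i : Fin K, b (i : ℕ))) = x :=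
          ZMod.natCast_rightInverse _
        have h5 : e ((x.val : ℕ) : ZMod (∏ i : Fin K, b (i : ℕ))) = y := by
          rw [hxv, hx, e.apply_symm_apply]
        have h6 : ((x.val : ℕ) : ZMod (b k)) = y ⟨k, hkK⟩ := by
          rw [← ekey x.val ⟨k, hkK⟩, h5]
        rw [← h6]
        exact hzero
      · funext i
        have hxv : ((x.val : ℕ) : ZMod (∏ i : Fin K, b (i : ℕ))) = x :=
          ZMod.natCast_rightInverse _
        have h5 : e ((x.val : ℕ) : ZMod (∏ i : Fin K, b (i : ℕ))) = y := by
          rw [hxv, hx, e.apply_symm_apply]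
        rw [← ekey x.val i, h5]
  · rw [← Fin.prod_univ_eq_prod_range fun k => b k - 1]
    apply Finset.prod_congr rfl
    intro i _
    rw [Finset.filter_ne', Finset.card_erase_of_mem (Finset.mem_univ _)]
    simp [ZMod.card]

open scoped Classical in
lemma aux_shift_count (b : ℕ → ℕ) (K c : ℕ) (hdvd : ∀ k < K, b k ∣ c) (q : ℕ) :
    ((Finset.Ioc (q * c) (q * c + c)).filter fun n => ∃ k < K, b k ∣ n).card =
      ((Finset.Ioc 0 c).filter fun n => ∃ k < K, b k ∣ n).card := by
  rw [show ((Finset.Ioc (q * c) (q * c + c)).filter fun n => ∃ k < K, b k ∣ n)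
      = Finset.image (· + q * c) ((Finset.Ioc 0 c).filter fun n => ∃ k < K, b k ∣ n) from ?_]
  · exact Finset.card_image_of_injective _ (add_left_injective _)
  · ext n
    simp only [Finset.mem_filter, Finset.mem_Ioc, Finset.mem_image]
    constructor
    · rintro ⟨⟨h1, h2⟩, k, hk, hd⟩
      refine ⟨n - q * c, ⟨⟨by omega, by omega⟩, k, hk, ?_⟩, by omega⟩
      exact (Nat.dvd_sub hd ((hdvd k hk).mul_left q))
    · rintro ⟨m, ⟨⟨h1, h2⟩, k, hk, hd⟩, rfl⟩
      exact ⟨⟨by omega, by omega⟩, k, hk, dvd_add hd ((hdvd k hk).mul_left q)⟩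

open scoped Classical in
lemma aux_mult_count (b : ℕ → ℕ) (K c : ℕ) (hdvd : ∀ k < K, b k ∣ c) (M : ℕ) :
    ((Finset.Ioc 0 (M * c)).filter fun n => ∃ k < K, b k ∣ n).card =
      M * ((Finset.Ioc 0 c).filter fun n => ∃ k < K, b k ∣ n).card := by
  induction M with
  | zero => simp
  | succ M ih =>
    have hsplit : Finset.Ioc 0 ((M + 1) * c) =
        Finset.Ioc 0 (M * c) ∪ Finset.Ioc (M * c) (M * c + c) := by
      rw [Finset.Ioc_union_Ioc_eq_Ioc (by omega) (by omega)]
      ring_nf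
    rw [hsplit, Finset.filter_union, Finset.card_union_of_disjoint, ih,
      aux_shift_count b K c hdvd M]
    · ring
    · apply Finset.disjoint_filter_filter
      rw [Finset.disjoint_left]
      intro a ha hb
      simp only [Finset.mem_Ioc] at ha hb
      omega

open scoped Classical in
lemma aux_density (b : ℕ → ℕ) (K c E : ℕ) (hc : 0 < c)
    (hmult : ∀ M : ℕ, ((Finset.Ioc 0 (M * c)).filter fun n => ∃ k < K, b k ∣ n).card = M * E) :
    Tendsto (fun N : ℕ => (((Finset.Ioc 0 N).filter fun n => ∃ k < K, b k ∣ n).card : ℝ) / N)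
      atTop (nhds ((E : ℝ) / c)) := by
  have hzero : Tendsto (fun N : ℕ => (E : ℝ) / N) atTop (nhds 0) :=
    tendsto_const_div_atTop_nhds_zero_nat (E : ℝ)
  have hlo : Tendsto (fun N : ℕ => (E : ℝ) / c - (E : ℝ) / N) atTop (nhds ((E : ℝ) / c)) := by
    simpa using tendsto_const_nhds.sub hzero
  have hhi : Tendsto (fun N : ℕ => (E : ℝ) / c + (E : ℝ) / N) atTop (nhds ((E : ℝ) / c)) := by
    simpa using tendsto_const_nhds.add hzero
  apply tendsto_of_tendsto_of_tendsto_of_le_of_le' hlo hhi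
  · -- lower bound eventually
    filter_upwards [eventually_ge_atTop 1] with N hN
    set q := N / c with hq
    set A := ((Finset.Ioc 0 N).filter fun n => ∃ k < K, b k ∣ n).card with hA
    have hqc : q * c ≤ N := Nat.div_mul_le_self N c
    have hqc2 : N < q * c + c := by
      have h1 : q * c + N % c = N := by rw [mul_comm]; exact Nat.div_add_mod N c
      have h2 : N % c < c := Nat.mod_lt _ hc
      omega
    have hlow : q * E ≤ A := by
      rw [← hmult q]
      exact Finset.card_le_card (Finset.filter_subset_filter _
        (Finset.Ioc_subset_Ioc le_rfl hqc))
    have hNpos : (0 : ℝ) < N := by exact_mod_cast hN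
    have hcpos : (0 : ℝ) < c := by exact_mod_cast hc
    have hlowR : (q : ℝ) * E ≤ A := by exact_mod_cast hlow
    have hqc2R : (N : ℝ) < q * c + c := by exact_mod_cast hqc2
    have hE0 : (0 : ℝ) ≤ E := Nat.cast_nonneg E
    rw [div_sub_div _ _ hcpos.ne' hNpos.ne', div_le_div_iff₀ (by positivity) hNpos]
    nlinarith [mul_le_mul_of_nonneg_right hlowR (mul_pos hcpos hNpos).le,
      mul_le_mul_of_nonneg_right hqc2R.le (mul_nonneg hE0 hNpos.le)]
  · -- upper bound eventually
    filter_upwards [eventually_ge_atTop 1] with N hN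
    set q := N / c with hq
    set A := ((Finset.Ioc 0 N).filter fun n => ∃ k < K, b k ∣ n).card with hA
    have hqc : q * c ≤ N := Nat.div_mul_le_self N c
    have hqc2 : N < q * c + c := by
      have h1 : q * c + N % c = N := by rw [mul_comm]; exact Nat.div_add_mod N c
      have h2 : N % c < c := Nat.mod_lt _ hc
      omega
    have hhigh : A ≤ (q + 1) * E := by
      rw [← hmult (q + 1)]
      exact Finset.card_le_card (Finset.filter_subset_filter _
        (Finset.Ioc_subset_Ioc le_rfl (le_of_lt (hqc2.trans_eq (by ring)))))
    have hNpos : (0 : ℝ) < N := by exact_mod_cast hN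
    have hcpos : (0 : ℝ) < c := by exact_mod_cast hc
    have hhighR : (A : ℝ) ≤ ((q : ℝ) + 1) * E := by exact_mod_cast hhigh
    have hqcR : (q : ℝ) * c ≤ N := by exact_mod_cast hqc
    have hE0 : (0 : ℝ) ≤ E := Nat.cast_nonneg E
    rw [div_add_div _ _ hcpos.ne' hNpos.ne', div_le_div_iff₀ hNpos (by positivity)]
    nlinarith [mul_le_mul_of_nonneg_right hhighR (mul_pos hcpos hNpos).le,
      mul_le_mul_of_nonneg_right hqcR (mul_nonneg hE0 hNpos.le)]
end pieces

open scoped Classical in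
/-- The multiples of `b_0, …, b_{K-1}` (pairwise coprime, `≥ 2`) have natural density
`1 − ∏_{k<K} (1 − 1/b_k)`, and consequently the Besicovitch approximation of the B-free
indicator by the periodic indicator `χ_K` is not uniform in shifts:
`limsup_N sup_j (1/N) ∑_{n ≤ N} |χ_B(n+j) − χ_K(n+j)| ≥ 1 − ∏_{k<K}(1 − 1/b_k) > 0`. -/
theorem stmt15 (b : ℕ → ℕ) (hb : ∀ k, 2 ≤ b k)
    (hcop : ∀ k l, k ≠ l → Nat.Coprime (b k) (b l))
    (hsum : Summable fun k => (1 : ℝ) / b k) (K : ℕ) (hK : 1 ≤ K)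
    (χB χK : ℕ → ℝ)
    (hχB : ∀ n, χB n = if ∀ k, ¬ b k ∣ n then 1 else 0)
    (hχK : ∀ n, χK n = if ∃ k < K, b k ∣ n then 1 else 0) :
    Tendsto (fun N : ℕ =>
        (((Finset.Icc 1 N).filter fun n => ∃ k < K, b k ∣ n).card : ℝ) / N) atTop
      (nhds (1 - ∏ k ∈ Finset.range K, (1 - 1 / (b k : ℝ)))) ∧
      (1 - ∏ k ∈ Finset.range K, (1 - 1 / (b k : ℝ)) ≤
        limsup (fun N : ℕ => ⨆ j : ℕ,
          (N : ℝ)⁻¹ * ∑ n ∈ Finset.Icc 1 N, |χB (n + j) - χK (n + j)|) atTop) ∧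
      0 < 1 - ∏ k ∈ Finset.range K, (1 - 1 / (b k : ℝ)) := by
  set c := ∏ k ∈ Finset.range K, b k with hc
  have hcpos : 0 < c := Finset.prod_pos fun k _ => by have := hb k; omega
  have hdvd : ∀ k < K, b k ∣ c := fun k hk =>
    Finset.dvd_prod_of_mem _ (Finset.mem_range.mpr hk)
  set P := fun n => ∃ k < K, b k ∣ n with hP
  set E := ((Finset.Ioc 0 c).filter P).card with hE
  set F := ((Finset.Ioc 0 c).filter fun n => ¬ P n).card with hF
  have hEF : E + F = c := by
    rw [hE, hF, Finset.card_filter_add_card_filter_not, Nat.card_Ioc]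
    omega
  have hFval : F = ∏ k ∈ Finset.range K, (b k - 1) :=
    aux_period_count b hb hcop K hK
  have hmult : ∀ M : ℕ, ((Finset.Ioc 0 (M * c)).filter P).card = M * E :=
    aux_mult_count b K c hdvd
  -- the real identity
  have hprod : (∏ k ∈ Finset.range K, (1 - 1 / (b k : ℝ))) = (F : ℝ) / c := by
    have h1 : ∀ k ∈ Finset.range K, (1 - 1 / (b k : ℝ)) = ((b k - 1 : ℕ) : ℝ) / (b k : ℝ) := by
      intro k _
      have hb2 : (2 : ℝ) ≤ (b k : ℝ) := by exact_mod_cast hb k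
      have : ((b k - 1 : ℕ) : ℝ) = (b k : ℝ) - 1 := by
        have := hb k; push_cast [Nat.cast_sub (by omega : 1 ≤ b k)]; ring
      rw [this]
      field_simp
    rw [Finset.prod_congr rfl h1, Finset.prod_div_distrib, hFval, hc]
    push_cast
    ring
  have hEc : (E : ℝ) / c = 1 - ∏ k ∈ Finset.range K, (1 - 1 / (b k : ℝ)) := by
    have hcR : (0 : ℝ) < c := by exact_mod_cast hcpos
    have hEFR : (E : ℝ) + F = c := by exact_mod_cast hEF
    rw [hprod]
    field_simp
    linarith
  -- positivity
  have hEpos : 0 < E := by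
    rw [hE]
    apply Finset.card_pos.mpr
    refine ⟨b 0, ?_⟩
    simp only [Finset.mem_filter, Finset.mem_Ioc]
    exact ⟨⟨by have := hb 0; omega, Nat.le_of_dvd hcpos (hdvd 0 hK)⟩, 0, hK, dvd_rfl⟩
  have hdpos : 0 < 1 - ∏ k ∈ Finset.range K, (1 - 1 / (b k : ℝ)) := by
    rw [← hEc]
    have h1 : (0 : ℝ) < E := by exact_mod_cast hEpos
    have h2 : (0 : ℝ) < c := by exact_mod_cast hcpos
    positivity
  -- part 1
  have hIcc : ∀ N : ℕ, Finset.Icc 1 N = Finset.Ioc 0 N := fun N => by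
    ext x; simp [Nat.lt_iff_add_one_le]
  have hpart1 : Tendsto (fun N : ℕ =>
      (((Finset.Icc 1 N).filter fun n => ∃ k < K, b k ∣ n).card : ℝ) / N) atTop
      (nhds (1 - ∏ k ∈ Finset.range K, (1 - 1 / (b k : ℝ)))) := by
    rw [← hEc]
    have := aux_density b K c E hcpos hmult
    apply this.congr
    intro N
    rw [hIcc]
  refine ⟨hpart1, ?_, hdpos⟩
  -- part 2
  set u := fun N : ℕ => ⨆ j : ℕ,
      (N : ℝ)⁻¹ * ∑ n ∈ Finset.Icc 1 N, |χB (n + j) - χK (n + j)| with hu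
  have hterm : ∀ m, |χB m - χK m| ≤ 1 := by
    intro m
    rw [hχB, hχK]
    split <;> split <;> norm_num
  have hval : ∀ N j : ℕ, (N : ℝ)⁻¹ * ∑ n ∈ Finset.Icc 1 N, |χB (n + j) - χK (n + j)| ≤ 1 := by
    intro N j
    have hsum1 : ∑ n ∈ Finset.Icc 1 N, |χB (n + j) - χK (n + j)| ≤ N := by
      calc ∑ n ∈ Finset.Icc 1 N, |χB (n + j) - χK (n + j)|
          ≤ ∑ n ∈ Finset.Icc 1 N, 1 := Finset.sum_le_sum fun n _ => hterm _
        _ = N := by simp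
    rcases Nat.eq_zero_or_pos N with h | h
    · subst h; simp
    · have hNpos : (0 : ℝ) < N := by exact_mod_cast h
      rw [inv_mul_le_iff₀ hNpos]
      simpa using hsum1
  have hbdd : ∀ N : ℕ, BddAbove (Set.range fun j : ℕ =>
      (N : ℝ)⁻¹ * ∑ n ∈ Finset.Icc 1 N, |χB (n + j) - χK (n + j)|) := by
    intro N
    exact ⟨1, by rintro _ ⟨j, rfl⟩; exact hval N j⟩
  have hbound : ∀ N, u N ≤ 1 := fun N => ciSup_le fun j => hval N j
  apply le_limsup_of_frequently_le _ (isBoundedUnder_of ⟨1, hbound⟩)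
  rw [frequently_atTop]
  intro N0
  refine ⟨(N0 + 1) * c, by nlinarith, ?_⟩
  set M := N0 + 1 with hM
  set N := M * c with hN
  -- CRT shift
  have hcrt : ∃ j : ℕ, c ∣ j ∧ ∀ n, 1 ≤ n → n ≤ N → ∃ k, b k ∣ n + j := by
    set m : Fin (N + 1) → ℕ := fun i => if (i : ℕ) = 0 then c else b (K + ((i : ℕ) - 1)) with hm
    have hm0 : ∀ i, m i ≠ 0 := by
      intro i
      simp only [hm]
      split
      · omega
      · have := hb (K + ((i : ℕ) - 1)); omega
    have hmcop : Pairwise (Function.onFun Nat.Coprime m) := by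
      intro i j hij
      have hvij : (i : ℕ) ≠ (j : ℕ) := fun h => hij (Fin.ext h)
      simp only [Function.onFun, hm]
      split <;> split
      · omega
      · apply Nat.Coprime.prod_left
        intro k hk
        exact hcop k (K + ((j : ℕ) - 1)) (by simp only [Finset.mem_range] at hk; omega)
      · apply Nat.Coprime.prod_right
        intro k hk
        exact hcop (K + ((i : ℕ) - 1)) k (by simp only [Finset.mem_range] at hk; omega)
      · exact hcop _ _ (by omega)
    obtain ⟨j, hj⟩ := aux_crt m hm0 hmcop fun i => -((i : ℕ) : ZMod (m i))
    have hdvdj : ∀ i : Fin (N + 1), m i ∣ (i : ℕ) + j := by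
      intro i
      rw [← ZMod.natCast_eq_zero_iff]
      push_cast
      rw [hj i]
      ring
    refine ⟨j, ?_, ?_⟩
    · have := hdvdj ⟨0, by omega⟩
      simpa [hm] using this
    · intro n h1 h2
      have hn0 : n ≠ 0 := by omega
      have := hdvdj ⟨n, by omega⟩
      simp only [hm, Fin.val_mk] at this
      rw [if_neg hn0] at this
      exact ⟨K + (n - 1), this⟩
  obtain ⟨j, hcj, hj⟩ := hcrt
  -- evaluate the sum at this j
  have hsum_eq : ∑ n ∈ Finset.Icc 1 N, |χB (n + j) - χK (n + j)|
      = ((Finset.Icc 1 N).filter P).card := by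
    rw [← Finset.sum_boole]
    apply Finset.sum_congr rfl
    intro n hn
    simp only [Finset.mem_Icc] at hn
    have hB0 : χB (n + j) = 0 := by
      rw [hχB, if_neg]
      push_neg
      obtain ⟨k, hk⟩ := hj n hn.1 hn.2
      exact ⟨k, hk⟩
    have hKiff : (∃ k < K, b k ∣ (n + j)) ↔ P n := by
      constructor
      · rintro ⟨k, hk, hd⟩
        refine ⟨k, hk, ?_⟩
        have hkj : b k ∣ j := (hdvd k hk).trans hcj
        have := Nat.dvd_sub hd hkj
        simpa using this
      · rintro ⟨k, hk, hd⟩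
        exact ⟨k, hk, dvd_add hd ((hdvd k hk).trans hcj)⟩
    rw [hχK, hB0]
    by_cases h : P n
    · rw [if_pos (hKiff.mpr h), if_pos h]
      norm_num
    · rw [if_neg (fun hc' => h (hKiff.mp hc')), if_neg h]
      norm_num
  have hcard : (((Finset.Icc 1 N).filter P).card : ℝ) = M * E := by
    rw [hIcc, hN, hmult M]
    push_cast
    ring
  have hvalue : (N : ℝ)⁻¹ * ∑ n ∈ Finset.Icc 1 N, |χB (n + j) - χK (n + j)|
      = 1 - ∏ k ∈ Finset.range K, (1 - 1 / (b k : ℝ)) := by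
    rw [hsum_eq, hcard, ← hEc, hN]
    have hMpos : (0 : ℝ) < M := by rw [hM]; positivity
    have hcR : (0 : ℝ) < c := by exact_mod_cast hcpos
    push_cast
    field_simp
  calc 1 - ∏ k ∈ Finset.range K, (1 - 1 / (b k : ℝ))
      = (N : ℝ)⁻¹ * ∑ n ∈ Finset.Icc 1 N, |χB (n + j) - χK (n + j)| := hvalue.symm
    _ ≤ u N := le_ciSup (hbdd N) j
end

section
/- Under the assumption that the Liouville sequence λ is generic for the Bernoulli(1/2) measure on {−1,1}^ℕ (a consequence of the Chowla conjecture), for the Bernoulli measure B on {−1,1}^ℕ and the random Mertens function M_ω(x) = Σ_{n≤x} ω(n): for B-almost every ω and every τ > 1/2, sup_{x^τ ≤ h ≤ x} (1/h) |M_ω(x+h) − M_ω(x)| → 0 as x → ∞. -/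
open MeasureTheory ProbabilityTheory Filter Real

private lemma aux_mgf {Ω : Type*} [MeasurableSpace Ω] (P : Measure Ω) [IsProbabilityMeasure P]
    (ω : ℕ → Ω → ℝ) (hmeas : ∀ k, Measurable (ω k))
    (hdist : ∀ k, Measure.map (ω k) P =
      (2⁻¹ : ENNReal) • Measure.dirac (1 : ℝ) + (2⁻¹ : ENNReal) • Measure.dirac (-1 : ℝ))
    (k : ℕ) (t : ℝ) : mgf (ω k) P t ≤ Real.exp (t^2/2) := by
  have hg : Measurable fun y : ℝ => Real.exp (t * y) := (measurable_id.const_mul t).exp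
  have h1 : mgf (ω k) P t = ∫ y, Real.exp (t * y) ∂(Measure.map (ω k) P) := by
    rw [mgf, integral_map (hmeas k).aemeasurable hg.aestronglyMeasurable]
  have i1 : Integrable (fun y : ℝ => Real.exp (t*y)) ((2⁻¹:ENNReal) • Measure.dirac (1:ℝ)) :=
    ((integrable_const _).congr (ae_eq_dirac _).symm).smul_measure (by simp)
  have i2 : Integrable (fun y : ℝ => Real.exp (t*y)) ((2⁻¹:ENNReal) • Measure.dirac (-1:ℝ)) :=
    ((integrable_const _).congr (ae_eq_dirac _).symm).smul_measure (by simp)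
  rw [h1, hdist k, integral_add_measure i1 i2, integral_smul_measure, integral_smul_measure,
    integral_dirac, integral_dirac]
  have h := Real.cosh_le_exp_half_sq t
  rw [Real.cosh_eq] at h
  simp only [mul_one, mul_neg_one, smul_eq_mul, ENNReal.toReal_inv, ENNReal.toReal_ofNat]
  linarith

private lemma aux_int {Ω : Type*} [MeasurableSpace Ω] (P : Measure Ω) [IsProbabilityMeasure P]
    (ω : ℕ → Ω → ℝ) (hmeas : ∀ k, Measurable (ω k))
    (hdist : ∀ k, Measure.map (ω k) P =
      (2⁻¹ : ENNReal) • Measure.dirac (1 : ℝ) + (2⁻¹ : ENNReal) • Measure.dirac (-1 : ℝ))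
    (k : ℕ) (t : ℝ) : Integrable (fun u => Real.exp (t * ω k u)) P := by
  have hs : MeasurableSet {y : ℝ | 1 < |y|} :=
    measurableSet_lt measurable_const continuous_abs.measurable
  have h0 : P ((ω k) ⁻¹' {y | 1 < |y|}) = 0 := by
    rw [← Measure.map_apply (hmeas k) hs, hdist k]
    simp [Measure.dirac_apply', hs, abs_one]
  have hae : ∀ᵐ u ∂P, |ω k u| ≤ 1 := by
    rw [ae_iff]
    convert h0 using 2
    ext u; simp [Set.mem_setOf_eq, not_le]
  refine Integrable.mono' (integrable_const (Real.exp |t|))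
    (((hmeas k).const_mul t).exp.aestronglyMeasurable) ?_
  filter_upwards [hae] with u hu
  rw [Real.norm_eq_abs, Real.abs_exp]
  apply Real.exp_le_exp.mpr
  calc t * ω k u ≤ |t * ω k u| := le_abs_self _
    _ = |t| * |ω k u| := abs_mul _ _
    _ ≤ |t| * 1 := by gcongr
    _ = |t| := mul_one _

private lemma aux_tail {Ω : Type*} [MeasurableSpace Ω] (P : Measure Ω) [IsProbabilityMeasure P]
    (ω : ℕ → Ω → ℝ) (hmeas : ∀ k, Measurable (ω k))
    (hindep : iIndepFun ω P)
    (hmgf1 : ∀ k t, mgf (ω k) P t ≤ Real.exp (t^2/2))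
    (hint1 : ∀ k t, Integrable (fun u => Real.exp (t * ω k u)) P)
    (a : ℝ) (K : ℕ) (hK : 1 ≤ K) :
    (P {u | ((K:ℝ))^a ≤ |∑ n ∈ Finset.Icc 1 K, ω n u|}).toReal
      ≤ 2 * Real.exp (-(K:ℝ)^(2*a-1)/2) := by
  have hK0 : (0:ℝ) < K := by exact_mod_cast hK
  simp only [← Finset.sum_apply]
  set t := (K:ℝ)^(a-1) with ht
  have htpos : 0 ≤ t := Real.rpow_nonneg hK0.le _
  set S : Ω → ℝ := ∑ n ∈ Finset.Icc 1 K, ω n with hS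
  have hmgfS : ∀ s : ℝ, mgf S P s ≤ Real.exp (K * s^2/2) := by
    intro s
    rw [hS, hindep.mgf_sum hmeas]
    calc ∏ n ∈ Finset.Icc 1 K, mgf (ω n) P s
        ≤ ∏ n ∈ Finset.Icc 1 K, Real.exp (s^2/2) :=
          Finset.prod_le_prod (fun i _ => mgf_nonneg) (fun i _ => hmgf1 i s)
      _ = Real.exp (s^2/2) ^ K := by rw [Finset.prod_const, Nat.card_Icc, Nat.add_sub_cancel]
      _ = Real.exp (K * s^2/2) := by rw [← Real.exp_nat_mul]; ring_nf
  have hintS : ∀ s : ℝ, Integrable (fun u => Real.exp (s * S u)) P := fun s =>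
    hindep.integrable_exp_mul_sum hmeas (fun i _ => hint1 i s)
  have e1 : t * (K:ℝ)^a = (K:ℝ)^(2*a-1) := by
    rw [ht, ← Real.rpow_add hK0]; ring_nf
  have e2 : (K:ℝ) * t^2 = (K:ℝ)^(2*a-1) := by
    have : (K:ℝ) * t ^ 2 = (K:ℝ)^(1:ℝ) * ((K:ℝ)^(a-1) * (K:ℝ)^(a-1)) := by
      rw [Real.rpow_one, sq, ht]
    rw [this, ← Real.rpow_add hK0, ← Real.rpow_add hK0]; ring_nf
  have harith : ∀ s : ℝ, s^2 = t^2 → Real.exp (-(t * (K:ℝ)^a)) * Real.exp ((K:ℝ) * s^2/2)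
      = Real.exp (-(K:ℝ)^(2*a-1)/2) := by
    intro s hs
    rw [← Real.exp_add]; congr 1; rw [hs]; rw [e2] at *; rw [e1]; ring
  have h1 : (P {u | (K:ℝ)^a ≤ S u}).toReal ≤ Real.exp (-(K:ℝ)^(2*a-1)/2) := by
    calc (P {u | (K:ℝ)^a ≤ S u}).toReal
        ≤ Real.exp (-t * (K:ℝ)^a) * mgf S P t :=
          measure_ge_le_exp_mul_mgf _ htpos (hintS t)
      _ ≤ Real.exp (-t * (K:ℝ)^a) * Real.exp ((K:ℝ) * t^2/2) := by
          exact mul_le_mul_of_nonneg_left (hmgfS t) (Real.exp_pos _).le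
      _ = Real.exp (-(K:ℝ)^(2*a-1)/2) := by rw [neg_mul]; exact harith t rfl
  have h2 : (P {u | S u ≤ -((K:ℝ)^a)}).toReal ≤ Real.exp (-(K:ℝ)^(2*a-1)/2) := by
    calc (P {u | S u ≤ -((K:ℝ)^a)}).toReal
        ≤ Real.exp (-(-t) * -((K:ℝ)^a)) * mgf S P (-t) :=
          measure_le_le_exp_mul_mgf _ (neg_nonpos.mpr htpos) (hintS (-t))
      _ ≤ Real.exp (-(-t) * -((K:ℝ)^a)) * Real.exp ((K:ℝ) * (-t)^2/2) := by
          exact mul_le_mul_of_nonneg_left (hmgfS (-t)) (Real.exp_pos _).le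
      _ = Real.exp (-(K:ℝ)^(2*a-1)/2) := by
          have := harith (-t) (neg_sq t)
          rw [← this]; ring_nf
  have hsub : {u | ((K:ℝ))^a ≤ |S u|} ⊆ {u | (K:ℝ)^a ≤ S u} ∪ {u | S u ≤ -((K:ℝ)^a)} := by
    intro u hu
    simp only [Set.mem_setOf_eq] at hu ⊢
    rcases le_abs.mp hu with h | h
    · exact Or.inl h
    · exact Or.inr (le_neg.mp h)
  calc (P {u | ((K:ℝ))^a ≤ |S u|}).toReal
      ≤ (P ({u | (K:ℝ)^a ≤ S u} ∪ {u | S u ≤ -((K:ℝ)^a)})).toReal := by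
        apply ENNReal.toReal_mono (measure_ne_top P _) (measure_mono hsub)
    _ ≤ ((P {u | (K:ℝ)^a ≤ S u}) + P {u | S u ≤ -((K:ℝ)^a)}).toReal := by
        apply ENNReal.toReal_mono (by finiteness) (measure_union_le _ _)
    _ = (P {u | (K:ℝ)^a ≤ S u}).toReal + (P {u | S u ≤ -((K:ℝ)^a)}).toReal :=
        ENNReal.toReal_add (measure_ne_top P _) (measure_ne_top P _)
    _ ≤ 2 * Real.exp (-(K:ℝ)^(2*a-1)/2) := by linarith

private lemma aux_summable (δ : ℝ) (hδ : 0 < δ) :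
    Summable (fun N : ℕ => Real.exp (-(N:ℝ)^δ/2)) := by
  have hlog := isLittleO_log_rpow_atTop hδ
  have hb : ∀ᶠ x : ℝ in atTop, ‖Real.log x‖ ≤ 4⁻¹ * ‖x ^ δ‖ :=
    hlog.bound (by norm_num)
  have hbn : ∀ᶠ n : ℕ in atTop, Real.exp (-(n:ℝ)^δ/2) ≤ (n:ℝ) ^ (-2:ℝ) := by
    filter_upwards [tendsto_natCast_atTop_atTop.eventually hb, eventually_ge_atTop 1]
      with n hn hn1
    have hn0 : (0:ℝ) < n := by exact_mod_cast hn1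
    have hlogn : 0 ≤ Real.log n := Real.log_nonneg (by exact_mod_cast hn1)
    have hpow : 0 ≤ (n:ℝ)^δ := Real.rpow_nonneg hn0.le _
    rw [Real.norm_eq_abs, Real.norm_eq_abs, abs_of_nonneg hlogn, abs_of_nonneg hpow] at hn
    have h2 : (n:ℝ)^(-2:ℝ) = Real.exp (Real.log n * (-2)) := Real.rpow_def_of_pos hn0 _
    rw [h2]
    exact Real.exp_le_exp.mpr (by linarith)
  obtain ⟨N0, hN0⟩ := eventually_atTop.mp hbn
  apply (summable_nat_add_iff N0).mp
  apply Summable.of_nonneg_of_le (fun n => (Real.exp_pos _).le)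
    (fun n => hN0 (n + N0) (Nat.le_add_left _ _))
  exact (summable_nat_add_iff N0).mpr (Real.summable_nat_rpow.mpr (by norm_num))

private lemma aux_det (S : ℕ → ℝ) (M : ℝ → ℝ) (hM : ∀ x : ℝ, M x = S ⌊x⌋₊) (a τ : ℝ)
    (ha0 : 0 < a) (haτ : a < τ)
    (hS : ∀ᶠ N : ℕ in atTop, |S N| ≤ (N:ℝ)^a) :
    Tendsto (fun x : ℝ => ⨆ h ∈ Set.Icc (x ^ τ) x, |M (x + h) - M x| / h)
      atTop (nhds 0) := by
  obtain ⟨N1, hN1⟩ := eventually_atTop.mp hS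
  have hg : Tendsto (fun x : ℝ => 2 * 2^a * x^(a-τ)) atTop (nhds 0) := by
    have h0 := (tendsto_rpow_neg_atTop (by linarith : (0:ℝ) < τ - a)).const_mul (2 * 2^a)
    simp only [mul_zero] at h0
    convert h0 using 2 with x
    rw [neg_sub]
  apply tendsto_of_tendsto_of_tendsto_of_le_of_le' tendsto_const_nhds hg
  · filter_upwards [eventually_ge_atTop (1:ℝ)] with x hx
    apply Real.iSup_nonneg; intro h
    apply Real.iSup_nonneg; intro hmem
    have hh : (0:ℝ) < h := lt_of_lt_of_le (Real.rpow_pos_of_pos (by linarith) τ) hmem.1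
    exact div_nonneg (abs_nonneg _) hh.le
  · filter_upwards [eventually_ge_atTop (1:ℝ), eventually_ge_atTop ((N1:ℝ))] with x hx1 hxN
    have hx0 : (0:ℝ) < x := by linarith
    have hg0 : (0:ℝ) ≤ 2 * 2^a * x^(a-τ) := by positivity
    apply Real.iSup_le _ hg0
    intro h
    by_cases hmem : h ∈ Set.Icc (x^τ) x
    · rw [ciSup_pos hmem]
      have hhpos : (0:ℝ) < h := lt_of_lt_of_le (Real.rpow_pos_of_pos hx0 τ) hmem.1
      have hb1 : |S ⌊x+h⌋₊| ≤ (2*x)^a := by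
        calc |S ⌊x+h⌋₊| ≤ ((⌊x+h⌋₊:ℕ):ℝ)^a :=
              hN1 _ (Nat.le_floor (by linarith))
          _ ≤ (2*x)^a := Real.rpow_le_rpow (Nat.cast_nonneg _)
              ((Nat.floor_le (by linarith)).trans (by linarith [hmem.2])) ha0.le
      have hb2 : |S ⌊x⌋₊| ≤ (2*x)^a := by
        calc |S ⌊x⌋₊| ≤ ((⌊x⌋₊:ℕ):ℝ)^a := hN1 _ (Nat.le_floor (by linarith))
          _ ≤ (2*x)^a := Real.rpow_le_rpow (Nat.cast_nonneg _)
              ((Nat.floor_le hx0.le).trans (by linarith)) ha0.le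
      calc |M (x + h) - M x| / h ≤ ((2*x)^a + (2*x)^a) / (x^τ) := by
            apply div_le_div₀ (by positivity) _ (Real.rpow_pos_of_pos hx0 τ) hmem.1
            rw [hM, hM]
            exact (abs_sub _ _).trans (add_le_add hb1 hb2)
        _ = 2 * 2^a * x^(a-τ) := by
            rw [Real.mul_rpow (by norm_num) hx0.le, Real.rpow_sub hx0]; ring
    · exact Real.iSup_le (fun hp => absurd hp hmem) hg0

set_option maxHeartbeats 1000000 in
/-- For i.i.d. symmetric ±1 coordinates (the Bernoulli(1/2) measure, as arises for the
Liouville function under the Chowla conjecture), the random Mertens function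
`M_ω(x) = ∑_{n ≤ x} ω(n)` satisfies, almost surely: for every `τ > 1/2`,
`sup_{x^τ ≤ h ≤ x} (1/h) |M_ω(x+h) − M_ω(x)| → 0` as `x → ∞`. -/
theorem stmt19 {Ω : Type*} [MeasurableSpace Ω] (P : Measure Ω) [IsProbabilityMeasure P]
    (ω : ℕ → Ω → ℝ) (hmeas : ∀ k, Measurable (ω k))
    (hindep : iIndepFun ω P)
    (hdist : ∀ k, Measure.map (ω k) P =
      (2⁻¹ : ENNReal) • Measure.dirac (1 : ℝ) + (2⁻¹ : ENNReal) • Measure.dirac (-1 : ℝ))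
    (M : Ω → ℝ → ℝ) (hM : ∀ u (x : ℝ), M u x = ∑ n ∈ Finset.Icc 1 ⌊x⌋₊, ω n u) :
    ∀ᵐ u ∂P, ∀ τ : ℝ, 1 / 2 < τ →
      Tendsto (fun x : ℝ => ⨆ h ∈ Set.Icc (x ^ τ) x, |M u (x + h) - M u x| / h)
        atTop (nhds 0) := by
  have hmgf1 : ∀ k t, mgf (ω k) P t ≤ Real.exp (t^2/2) := aux_mgf P ω hmeas hdist
  have hint1 : ∀ k t, Integrable (fun u => Real.exp (t * ω k u)) P := aux_int P ω hmeas hdist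
  have key : ∀ᵐ u ∂P, ∀ m : ℕ, ∀ᶠ N : ℕ in atTop,
      |∑ n ∈ Finset.Icc 1 N, ω n u| ≤ (N:ℝ) ^ ((1:ℝ)/2 + ((m:ℝ)+2)⁻¹) := by
    rw [ae_all_iff]
    intro m
    set a : ℝ := (1:ℝ)/2 + ((m:ℝ)+2)⁻¹ with ha_def
    have hm2 : (0:ℝ) < (m:ℝ)+2 := by positivity
    have hδ : 0 < 2*a - 1 := by
      have := inv_pos.mpr hm2
      rw [ha_def]; linarith
    set s : ℕ → Set Ω :=
      fun N => {u | ((N+1:ℕ):ℝ)^a ≤ |∑ n ∈ Finset.Icc 1 (N+1), ω n u|} with hs_def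
    have htsum : (∑' N, P (s N)) ≠ ⊤ := by
      have hsummable : Summable (fun N : ℕ => 2 * Real.exp (-((N+1:ℕ):ℝ)^(2*a-1)/2)) := by
        apply Summable.mul_left
        exact (summable_nat_add_iff (f := fun K : ℕ => Real.exp (-(K:ℝ)^(2*a-1)/2)) 1).mpr
          (aux_summable _ hδ)
      have hb : ∀ N : ℕ, P (s N) ≤ ENNReal.ofReal (2 * Real.exp (-((N+1:ℕ):ℝ)^(2*a-1)/2)) := by
        intro N
        rw [← ENNReal.ofReal_toReal (measure_ne_top P (s N))]
        exact ENNReal.ofReal_le_ofReal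
          (aux_tail P ω hmeas hindep hmgf1 hint1 a (N+1) (Nat.succ_le_succ (Nat.zero_le N)))
      apply ne_top_of_le_ne_top (ENNReal.ofReal_ne_top
        (r := ∑' N : ℕ, 2 * Real.exp (-((N+1:ℕ):ℝ)^(2*a-1)/2)))
      calc ∑' N, P (s N) ≤ ∑' N : ℕ, ENNReal.ofReal (2 * Real.exp (-((N+1:ℕ):ℝ)^(2*a-1)/2)) :=
            ENNReal.tsum_le_tsum hb
        _ = ENNReal.ofReal (∑' N : ℕ, 2 * Real.exp (-((N+1:ℕ):ℝ)^(2*a-1)/2)) :=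
            (ENNReal.ofReal_tsum_of_nonneg (fun N => by positivity) hsummable).symm
    filter_upwards [ae_eventually_notMem htsum] with u hu
    rw [eventually_atTop] at hu ⊢
    obtain ⟨N0, hN0⟩ := hu
    refine ⟨N0 + 1, fun N hN => ?_⟩
    obtain ⟨N', rfl⟩ : ∃ N', N = N' + 1 := ⟨N - 1, by omega⟩
    have h := hN0 N' (by omega)
    simp only [hs_def, Set.mem_setOf_eq, not_le] at h
    exact h.le
  filter_upwards [key] with u hkey
  intro τ hτ
  obtain ⟨m, hm⟩ := exists_nat_gt ((τ - 1/2)⁻¹)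
  have h1 : (0:ℝ) < τ - 1/2 := by linarith
  have hm2 : (0:ℝ) < (m:ℝ) + 2 := by positivity
  have haτ : (1:ℝ)/2 + ((m:ℝ)+2)⁻¹ < τ := by
    have h3 : (τ - 1/2)⁻¹ < (m:ℝ) + 2 := by linarith
    have h4 : ((m:ℝ)+2)⁻¹ < τ - 1/2 := by
      have := (inv_lt_inv₀ hm2 (inv_pos.mpr h1)).mpr h3
      rwa [inv_inv] at this
    linarith
  exact aux_det (fun N => ∑ n ∈ Finset.Icc 1 N, ω n u) (M u) (hM u)
    ((1:ℝ)/2 + ((m:ℝ)+2)⁻¹) τ (by positivity) haτ (hkey m)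
end
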